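/- Let (X,s) be a minimal dynamical system and let x ∈ X. Then (X,s) has quasi-discrete spectrum if and only if the linear span of ω_x C(X) ∩ 𝒫 is dense in ω_x C(X). Consequently, if (X,s) has quasi-discrete spectrum, then ω_x C(X) ⊆ 𝒲. -/

import Mathlib

noncomputable section

/-- The quasi-eigenfunction groups `G_m(X,u)` inside `C(X, ℂ)` (unimodular
continuous functions): `G_0` = unimodular constants,
`G_{m+1} = {g unimodular : g ∘ u = f · g for some f ∈ G_m}`. -/
def QEm {X : Type*} [TopologicalSpace X] (u : X → X) : ℕ → Set C(X, ℂ)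
  | 0 => {g | (∀ x, ‖g x‖ = 1) ∧ ∃ c : ℂ, ∀ x, g x = c}
  | m + 1 => {g | (∀ x, ‖g x‖ = 1) ∧ ∃ f ∈ QEm u m, ∀ x, g (u x) = f x * g x}

/-- `(X,u)` has (topological) quasi-discrete spectrum: the linear span of the
quasi-eigenfunctions `G(X,u) = ⋃_m G_m(X,u)` is dense in `C(X, ℂ)`. -/
def HasQDS {X : Type*} [TopologicalSpace X] (u : X → X) : Prop :=
  Dense (↑(Submodule.span ℂ (⋃ m, QEm u m)) : Set C(X, ℂ))

/-- The map `ω_x : C(X) → ℓ^∞(ℤ)`, `ω_x(f)(n) = f(s^n x)`. -/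
def omegaSeq {X : Type*} [TopologicalSpace X] [CompactSpace X]
    (s : Equiv.Perm X) (x : X) (f : C(X, ℂ)) : BoundedContinuousFunction ℤ ℂ :=
  (BoundedContinuousFunction.mkOfCompact f).compContinuous
    ⟨fun n : ℤ => (s ^ n) x, continuous_of_discreteTopology⟩

/-- `𝒫_m ⊆ ℓ^∞(ℤ)`: sequences `n ↦ e^{2πi p(n)}`, `p` a real polynomial of
degree at most `m`. -/
def Pdeg (m : ℕ) : Set (BoundedContinuousFunction ℤ ℂ) :=
  {F | ∃ p : Polynomial ℝ, p.natDegree ≤ m ∧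
    ∀ n : ℤ, F n = Complex.exp (2 * Real.pi * Complex.I * ((p.eval (n : ℝ) : ℝ) : ℂ))}

/-- `𝒫 = ⋃_m 𝒫_m`: all sequences of polynomial type. -/
def Pall : Set (BoundedContinuousFunction ℤ ℂ) := ⋃ m, Pdeg m

/-- The Weyl algebra `𝒲`: the closed linear span of `𝒫` in `ℓ^∞(ℤ)`. -/
def Wset : Set (BoundedContinuousFunction ℤ ℂ) :=
  closure (↑(Submodule.span ℂ Pall) : Set (BoundedContinuousFunction ℤ ℂ))

/-! ### Auxiliary polynomial lemmas -/

open Polynomial in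
/-- Discrete antiderivatives of real polynomials exist. -/
lemma exists_antideriv_aux : ∀ n : ℕ, ∀ q : Polynomial ℝ, q.natDegree ≤ n →
    ∃ P : Polynomial ℝ, P.comp (X + 1) - P = q := by
  intro n
  induction n with
  | zero =>
    intro q hq
    refine ⟨C (q.coeff 0) * X, ?_⟩
    rw [eq_C_of_natDegree_le_zero hq]
    simp [mul_comp]
    ring
  | succ n ih =>
    intro q hq
    set c : ℝ := q.coeff (n + 1) with hc
    set D : Polynomial ℝ := (X + 1) ^ (n + 2) - X ^ (n + 2) with hD
    have hDco : ∀ k, D.coeff k = ((n+2).choose k : ℝ) - (X ^ (n+2) : Polynomial ℝ).coeff k := by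
      intro k; simp [hD, coeff_X_add_one_pow]
    have hDdeg : D.natDegree ≤ n + 1 := by
      rw [natDegree_le_iff_coeff_eq_zero]
      intro N hN
      rw [hDco]
      rcases eq_or_lt_of_le (Nat.succ_le_of_lt hN) with h | h
      · rw [← h]; simp
      · rw [Nat.choose_eq_zero_of_lt h, coeff_X_pow]
        simp [Nat.ne_of_gt h]
    have hDc : D.coeff (n + 1) = (n + 2 : ℝ) := by
      rw [hDco, coeff_X_pow]
      push_cast
      simp [Nat.choose_succ_self_right]
      ring
    set r : Polynomial ℝ := q - C (c / (n + 2)) * D with hr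
    have hrdeg : r.natDegree ≤ n := by
      rw [natDegree_le_iff_coeff_eq_zero]
      intro N hN
      rcases eq_or_lt_of_le (Nat.succ_le_of_lt hN) with h | h
      · rw [hr, coeff_sub, coeff_C_mul, ← h, hDc, ← hc]
        field_simp
        ring
      · rw [hr, coeff_sub, coeff_C_mul,
          natDegree_le_iff_coeff_eq_zero.mp hq N h,
          natDegree_le_iff_coeff_eq_zero.mp hDdeg N h]
        ring
    obtain ⟨P1, hP1⟩ := ih r hrdeg
    refine ⟨C (c / (n + 2)) * X ^ (n + 2) + P1, ?_⟩
    rw [add_comp, mul_comp, C_comp, pow_comp, X_comp]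
    have : C (c / (n + 2)) * (X + 1) ^ (n + 2) + P1.comp (X + 1) -
        (C (c / (n + 2)) * X ^ (n + 2) + P1) = C (c / (n + 2)) * D + (P1.comp (X+1) - P1) := by
      rw [hD]; ring
    rw [this, hP1, hr]; ring

open Polynomial in
/-- The difference operator decreases (nat) degree. -/
lemma delta_natDegree_le (p : Polynomial ℝ) (d : ℕ) (hp : p.natDegree ≤ d + 1) :
    (p.comp (X + 1) - p).natDegree ≤ d := by
  by_cases h0 : p.comp (X + 1) - p = 0
  · simp [h0]
  rcases eq_or_ne p 0 with rfl | hp0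
  · simp at h0
  have hx1 : (X + 1 : Polynomial ℝ).natDegree = 1 := by
    simpa using natDegree_X_add_C (1 : ℝ)
  have hcompdeg : (p.comp (X + 1)).natDegree = p.natDegree := by
    rw [natDegree_comp, hx1, mul_one]
  have hlead : (p.comp (X + 1)).leadingCoeff = p.leadingCoeff := by
    rw [leadingCoeff_comp (by rw [hx1]; exact one_ne_zero)]
    rw [show (X + 1 : Polynomial ℝ) = X + C 1 by simp, leadingCoeff_X_add_C]
    simp
  have hcomp0 : p.comp (X + 1) ≠ 0 := by
    intro h
    rw [← leadingCoeff_eq_zero, hlead, leadingCoeff_eq_zero] at h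
    exact hp0 h
  have hdeg : (p.comp (X + 1)).degree = p.degree := by
    rw [degree_eq_natDegree hcomp0, degree_eq_natDegree hp0, hcompdeg]
  have hh := degree_sub_lt hdeg hcomp0 hlead
  rw [hdeg] at hh
  have hlt : (p.comp (X + 1) - p).natDegree < p.natDegree :=
    natDegree_lt_natDegree h0 hh
  omega

/-- Unimodular complex numbers are exponentials `e^{2πia}`. -/
lemma unimodular_exp (c : ℂ) (hc : ‖c‖ = 1) :
    ∃ a : ℝ, c = Complex.exp (2 * Real.pi * Complex.I * (a : ℂ)) := by
  set θ := c.arg with hθ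
  refine ⟨θ / (2 * Real.pi), ?_⟩
  have h := Complex.norm_mul_exp_arg_mul_I c
  rw [hc, Complex.ofReal_one, one_mul, ← hθ] at h
  rw [← h]
  congr 1
  have hpi : (Real.pi : ℂ) ≠ 0 := by exact_mod_cast Real.pi_ne_zero
  push_cast
  field_simp

/-! ### Auxiliary dynamical lemmas -/

section Aux

set_option linter.unusedSectionVars false

variable {X : Type*} [TopologicalSpace X] [CompactSpace X] (s : Equiv.Perm X) (x : X)

lemma omegaSeq_apply (f : C(X, ℂ)) (n : ℤ) : omegaSeq s x f n = f ((s ^ n) x) := rfl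

lemma perm_zpow_succ (n : ℤ) : (s ^ (n + 1)) x = s ((s ^ n) x) := by
  rw [add_comm, zpow_one_add]; rfl

lemma exp2pi_abs (a : ℝ) :
    ‖Complex.exp (2 * Real.pi * Complex.I * (a : ℝ))‖ = 1 := by
  rw [Complex.norm_exp]
  have : (2 * (Real.pi : ℂ) * Complex.I * (a : ℂ)).re = 0 := by
    simp [Complex.mul_re, Complex.mul_im]
  rw [this, Real.exp_zero]

/-- ω as a linear map. -/
def omegaL : C(X, ℂ) →ₗ[ℂ] BoundedContinuousFunction ℤ ℂ where
  toFun := omegaSeq s x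
  map_add' f g := by ext n; simp [omegaSeq]
  map_smul' c f := by ext n; simp [omegaSeq]

lemma omega_norm (hmin : Dense (Set.range fun n : ℤ => (s ^ n) x)) (f : C(X, ℂ)) :
    ‖omegaSeq s x f‖ = ‖f‖ := by
  apply le_antisymm
  · refine BoundedContinuousFunction.norm_le (norm_nonneg f) |>.mpr fun n => ?_
    exact ContinuousMap.norm_coe_le_norm f _
  · refine (ContinuousMap.norm_le f (norm_nonneg _)).mpr fun y => ?_
    have hC : IsClosed {y : X | ‖f y‖ ≤ ‖omegaSeq s x f‖} :=
      isClosed_le (continuous_norm.comp f.continuous) continuous_const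
    have hsub : (Set.range fun n : ℤ => (s ^ n) x) ⊆ {y : X | ‖f y‖ ≤ ‖omegaSeq s x f‖} := by
      rintro _ ⟨n, rfl⟩
      exact BoundedContinuousFunction.norm_coe_le_norm (omegaSeq s x f) n
    have : closure (Set.range fun n : ℤ => (s ^ n) x) ⊆ {y : X | ‖f y‖ ≤ ‖omegaSeq s x f‖} :=
      hC.closure_subset_iff.mpr hsub
    rw [hmin.closure_eq] at this
    exact this (Set.mem_univ y)

lemma omega_isometry (hmin : Dense (Set.range fun n : ℤ => (s ^ n) x)) :
    Isometry (omegaSeq s x) := by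
  intro f g
  rw [edist_dist, edist_dist, dist_eq_norm, dist_eq_norm]
  have : omegaSeq s x f - omegaSeq s x g = omegaSeq s x (f - g) := by
    have := (omegaL s x).map_sub f g
    simpa [omegaL] using this.symm
  rw [this, omega_norm s x hmin]

open Polynomial in
/-- Forward: quasi-eigenfunctions have polynomial-type orbit sequences. -/
lemma forward_elem : ∀ m : ℕ, ∀ g : C(X, ℂ), g ∈ QEm (⇑s) m →
    ∃ p : Polynomial ℝ, ∀ n : ℤ,
      omegaSeq s x g n = Complex.exp (2 * Real.pi * Complex.I * ((p.eval (n : ℝ) : ℝ) : ℂ)) := by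
  intro m
  induction m with
  | zero =>
    rintro g ⟨habs, c, hc⟩
    obtain ⟨a, ha⟩ := unimodular_exp c (by rw [← hc x]; exact habs x)
    exact ⟨C a, fun n => by rw [omegaSeq_apply, hc, ha, eval_C]⟩
  | succ m ih =>
    rintro g ⟨habs, f, hf, hrel⟩
    obtain ⟨q, hq⟩ := ih f hf
    obtain ⟨a, ha⟩ := unimodular_exp (g x) (habs x)
    obtain ⟨P1, hP1⟩ := exists_antideriv_aux q.natDegree q le_rfl
    set P : Polynomial ℝ := P1 + C (a - P1.eval 0) with hP
    have hPdelta : ∀ t : ℝ, P.eval (t + 1) - P.eval t = q.eval t := by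
      intro t
      have := congrArg (fun r => Polynomial.eval t r) hP1
      simp only [eval_sub, eval_comp, eval_add, eval_X, eval_one] at this
      simp [hP]
      linarith [this]
    have hP0 : P.eval 0 = a := by simp [hP]
    refine ⟨P, ?_⟩
    intro n
    rw [omegaSeq_apply]
    induction n using Int.induction_on with
    | zero => simpa [hP0] using ha
    | succ k hk =>
      have hs1 : (s ^ ((k : ℤ) + 1)) x = s ((s ^ (k : ℤ)) x) := perm_zpow_succ s x k
      have hfval : f ((s ^ (k : ℤ)) x) =
          Complex.exp (2 * Real.pi * Complex.I * ((q.eval (((k : ℤ) : ℝ)) : ℝ) : ℂ)) := by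
        have := hq (k : ℤ); rwa [omegaSeq_apply] at this
      rw [hs1, hrel, hk, hfval, ← Complex.exp_add]
      congr 1
      have ht := hPdelta ((k : ℕ) : ℝ)
      push_cast
      rw [show P.eval ((k : ℝ) + 1) = q.eval (k : ℝ) + P.eval (k : ℝ) from by linarith]
      push_cast
      ring
    | pred k hk =>
      have hs1 : (s ^ (-(k : ℤ))) x = s ((s ^ (-(k : ℤ) - 1)) x) := by
        have := perm_zpow_succ s x (-(k : ℤ) - 1)
        rw [sub_add_cancel] at this
        exact this
      have hval : g ((s ^ (-(k:ℤ))) x) = f ((s ^ (-(k:ℤ) - 1)) x) * g ((s ^ (-(k:ℤ) - 1)) x) := by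
        rw [hs1]; exact hrel _
      have hfval : f ((s ^ (-(k:ℤ) - 1)) x) =
          Complex.exp (2 * Real.pi * Complex.I * ((q.eval (((-(k:ℤ) - 1 : ℤ)) : ℝ) : ℝ) : ℂ)) := by
        have := hq (-(k:ℤ) - 1); rwa [omegaSeq_apply] at this
      have hne : f ((s ^ (-(k:ℤ) - 1)) x) ≠ 0 := by
        rw [hfval]; exact Complex.exp_ne_zero _
      apply mul_left_cancel₀ hne
      rw [← hval, hk, hfval, ← Complex.exp_add]
      congr 1
      have ht := hPdelta (-(k:ℝ) - 1)
      rw [show (-(k:ℝ) - 1 + 1) = -(k:ℝ) by ring] at ht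
      push_cast
      rw [show P.eval (-(k:ℝ)) = q.eval (-(k:ℝ) - 1) + P.eval (-(k:ℝ) - 1) from by linarith]
      push_cast
      ring

open Polynomial in
/-- Reverse: a continuous function whose orbit sequence is of polynomial type of
degree at most `d` is a quasi-eigenfunction of level `d`. -/
lemma reverse_elem (hsc : Continuous ⇑s) (hmin : Dense (Set.range fun n : ℤ => (s ^ n) x)) :
    ∀ d : ℕ, ∀ p : Polynomial ℝ, p.natDegree ≤ d → ∀ g : C(X, ℂ),
    (∀ n : ℤ, omegaSeq s x g n =
      Complex.exp (2 * Real.pi * Complex.I * ((p.eval (n : ℝ) : ℝ) : ℂ))) →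
    g ∈ QEm (⇑s) d := by
  intro d
  induction d with
  | zero =>
    intro p hp g hω
    have habs : ∀ y, ‖g y‖ = 1 := by
      have heq : (fun y => ‖g y‖) = fun _ : X => (1 : ℝ) := by
        refine Continuous.ext_on hmin (continuous_norm.comp g.continuous)
          continuous_const ?_
        rintro _ ⟨n, rfl⟩
        have := hω n
        rw [omegaSeq_apply] at this
        simp only []
        rw [this]
        exact exp2pi_abs _
      exact fun y => congrFun heq y
    set a : ℝ := p.coeff 0 with ha
    have hpc : p = C a := eq_C_of_natDegree_le_zero hp
    have hgc : ⇑g = fun _ : X => Complex.exp (2 * Real.pi * Complex.I * (a : ℂ)) := by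
      refine Continuous.ext_on hmin g.continuous continuous_const ?_
      rintro _ ⟨n, rfl⟩
      have := hω n
      rw [omegaSeq_apply] at this
      rw [this, hpc, eval_C]
    exact ⟨habs, Complex.exp (2 * Real.pi * Complex.I * (a : ℂ)), fun y => congrFun hgc y⟩
  | succ d ih =>
    intro p hp g hω
    have habs : ∀ y, ‖g y‖ = 1 := by
      have heq : (fun y => ‖g y‖) = fun _ : X => (1 : ℝ) := by
        refine Continuous.ext_on hmin (continuous_norm.comp g.continuous)
          continuous_const ?_
        rintro _ ⟨n, rfl⟩
        have := hω n
        rw [omegaSeq_apply] at this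
        simp only []
        rw [this]
        exact exp2pi_abs _
      exact fun y => congrFun heq y
    set q : Polynomial ℝ := p.comp (Polynomial.X + 1) - p with hqdef
    have hqdeg : q.natDegree ≤ d := delta_natDegree_le p d hp
    set f : C(X, ℂ) :=
      ⟨fun y => g (s y) * (starRingEnd ℂ) (g y),
        (g.continuous.comp hsc).mul (Complex.continuous_conj.comp g.continuous)⟩ with hfdef
    have hωf : ∀ n : ℤ, omegaSeq s x f n =
        Complex.exp (2 * Real.pi * Complex.I * ((q.eval (n : ℝ) : ℝ) : ℂ)) := by
      intro n
      rw [omegaSeq_apply]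
      have h1 : g (s ((s ^ n) x)) =
          Complex.exp (2 * Real.pi * Complex.I * ((p.eval ((n + 1 : ℤ) : ℝ) : ℝ) : ℂ)) := by
        rw [← perm_zpow_succ]
        have := hω (n + 1)
        rwa [omegaSeq_apply] at this
      have h2 : g ((s ^ n) x) =
          Complex.exp (2 * Real.pi * Complex.I * ((p.eval ((n : ℤ) : ℝ) : ℝ) : ℂ)) := by
        have := hω n
        rwa [omegaSeq_apply] at this
      show g (s ((s ^ n) x)) * (starRingEnd ℂ) (g ((s ^ n) x)) = _
      rw [h1, h2, ← Complex.exp_conj, ← Complex.exp_add]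
      congr 1
      simp only [map_mul, Complex.conj_I, Complex.conj_ofReal, map_ofNat]
      have : q.eval ((n : ℤ) : ℝ) = p.eval ((n + 1 : ℤ) : ℝ) - p.eval ((n : ℤ) : ℝ) := by
        rw [hqdef, eval_sub, eval_comp]
        push_cast
        simp
      rw [this]
      push_cast
      ring
    have hf : f ∈ QEm (⇑s) d := ih q hqdeg f hωf
    refine ⟨habs, f, hf, fun y => ?_⟩
    have h1 : (starRingEnd ℂ) (g y) * g y = 1 := by
      rw [mul_comm, Complex.mul_conj]
      rw [Complex.normSq_eq_norm_sq, habs y]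
      norm_num
    show g (s y) = g (s y) * (starRingEnd ℂ) (g y) * g y
    rw [mul_assoc, h1, mul_one]

end Aux

/-- For a minimal system `(X,s)` and `x ∈ X`: `(X,s)` has quasi-discrete
spectrum iff the linear span of `ω_x C(X) ∩ 𝒫` is dense in `ω_x C(X)`;
consequently, if `(X,s)` has quasi-discrete spectrum then `ω_x C(X) ⊆ 𝒲`. -/
theorem stmt12 {X : Type*} [TopologicalSpace X] [CompactSpace X] [T2Space X]
    (s : Equiv.Perm X) (hs : Continuous ⇑s) (hs' : Continuous ⇑s.symm)
    (hmin : ∀ y : X, Dense (Set.range fun n : ℤ => (s ^ n) y)) (x : X) :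
    (HasQDS ⇑s ↔
      Set.range (omegaSeq s x) ⊆
        closure (↑(Submodule.span ℂ (Set.range (omegaSeq s x) ∩ Pall)) :
          Set (BoundedContinuousFunction ℤ ℂ))) ∧
    (HasQDS ⇑s → Set.range (omegaSeq s x) ⊆ Wset) := by
  have hmx := hmin x
  have hiff : HasQDS ⇑s ↔
      Set.range (omegaSeq s x) ⊆
        closure (↑(Submodule.span ℂ (Set.range (omegaSeq s x) ∩ Pall)) :
          Set (BoundedContinuousFunction ℤ ℂ)) := by
    constructor
    · -- forward
      intro hQ
      rintro F ⟨h, rfl⟩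
      have hcont : Continuous (omegaSeq s x) := (omega_isometry s x hmx).continuous
      have h1 : h ∈ closure (↑(Submodule.span ℂ (⋃ m, QEm (⇑s) m)) : Set C(X, ℂ)) := by
        rw [hQ.closure_eq]; trivial
      have h2 : omegaSeq s x h ∈
          closure ((omegaSeq s x) '' ↑(Submodule.span ℂ (⋃ m, QEm (⇑s) m))) :=
        image_closure_subset_closure_image hcont ⟨h, h1, rfl⟩
      refine closure_mono ?_ h2
      rintro _ ⟨h₀, hh₀, rfl⟩
      have hmem : omegaSeq s x h₀ ∈
          Submodule.map (omegaL s x) (Submodule.span ℂ (⋃ m, QEm (⇑s) m)) :=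
        ⟨h₀, hh₀, rfl⟩
      rw [Submodule.map_span] at hmem
      have hsub : ⇑(omegaL s x) '' (⋃ m, QEm (⇑s) m) ⊆
          Set.range (omegaSeq s x) ∩ Pall := by
        rintro _ ⟨g, hg, rfl⟩
        obtain ⟨m, hgm⟩ := Set.mem_iUnion.mp hg
        obtain ⟨p, hp⟩ := forward_elem s x m g hgm
        exact ⟨⟨g, rfl⟩, Set.mem_iUnion.mpr ⟨p.natDegree, p, le_rfl, hp⟩⟩
      exact Submodule.span_mono hsub hmem
    · -- reverse
      intro h
      intro f
      rw [Metric.mem_closure_iff]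
      intro ε hε
      have hf : omegaSeq s x f ∈
          closure (↑(Submodule.span ℂ (Set.range (omegaSeq s x) ∩ Pall)) :
            Set (BoundedContinuousFunction ℤ ℂ)) := h ⟨f, rfl⟩
      rw [Metric.mem_closure_iff] at hf
      obtain ⟨F, hF, hdist⟩ := hf ε hε
      have hle : Submodule.span ℂ (Set.range (omegaSeq s x) ∩ Pall) ≤
          Submodule.map (omegaL s x) (Submodule.span ℂ (⋃ m, QEm (⇑s) m)) := by
        rw [Submodule.span_le]
        rintro F' ⟨⟨g, rfl⟩, hP⟩
        obtain ⟨m, hm⟩ := Set.mem_iUnion.mp hP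
        obtain ⟨p, hpd, hpe⟩ := hm
        have hg : g ∈ QEm (⇑s) m := reverse_elem s x hs hmx m p hpd g hpe
        exact ⟨g, Submodule.subset_span (Set.mem_iUnion.mpr ⟨m, hg⟩), rfl⟩
      obtain ⟨g, hg, rfl⟩ := hle hF
      refine ⟨g, hg, ?_⟩
      have hd : dist (omegaSeq s x f) (omegaSeq s x g) = dist f g :=
        (omega_isometry s x hmx).dist_eq f g
      rw [← hd]
      exact hdist
  refine ⟨hiff, fun hQ F hF => ?_⟩
  have h1 := hiff.mp hQ hF
  refine closure_mono ?_ h1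
  exact Submodule.span_mono Set.inter_subset_right

end
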